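/- arXiv:2104.01746 — 5 statements merged into one kernel-verified Lean document; each statement's English description precedes it below -/
import Mathlib

section
/- For every m ≥ 1, the Bernoulli-Carlitz numbers satisfy the closed form BC_m = Π(m) · Σ_{k=1}^{m} (−1)^k Σ 1/(Π(r^{i_1}) ⋯ Π(r^{i_k})), where the inner sum ranges over all k-tuples (i_1, …, i_k) of nonnegative integers with r^{i_1} + ⋯ + r^{i_k} = m + k and r^{i_j} > 1 for all j. -/
noncomputable section

/-- The Carlitz bracket `[i] = T^(r^i) - T` in `k = 𝔽_r(T)`, where `r = |Fq|`. -/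
def carlitzBracket (Fq : Type*) [Field Fq] [Fintype Fq] (i : ℕ) : RatFunc Fq :=
  RatFunc.X ^ (Fintype.card Fq) ^ i - RatFunc.X

/-- `D_0 = 1`, `D_i = [i]·[i-1]^r ⋯ [1]^(r^(i-1))`, via `D_{i+1} = [i+1] * D_i ^ r`. -/
def carlitzD (Fq : Type*) [Field Fq] [Fintype Fq] : ℕ → RatFunc Fq
  | 0 => 1
  | i + 1 => carlitzBracket Fq (i + 1) * carlitzD Fq i ^ Fintype.card Fq

/-- The Carlitz factorial `Π(n) = ∏_j D_j ^ c_j`, where `n = ∑_j c_j r^j` is the base-`r`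
expansion of `n`. -/
def carlitzPi (Fq : Type*) [Field Fq] [Fintype Fq] (n : ℕ) : RatFunc Fq :=
  ∏ j ∈ Finset.range (n + 1),
    carlitzD Fq j ^ ((Nat.digits (Fintype.card Fq) n).getD j 0)

/-- The coefficient `δ*_e` of `z^e` in `e_C(z)/z = ∑_{j≥0} z^(r^j - 1)/D_j`:
`δ*_e = 1/D_n` if `e = r^n - 1` for some `n`, and `0` otherwise. -/
def carlitzExpCoeff (Fq : Type*) [Field Fq] [Fintype Fq] (e : ℕ) : RatFunc Fq :=
  if (Fintype.card Fq) ^ (Nat.log (Fintype.card Fq) (e + 1)) = e + 1 then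
    (carlitzD Fq (Nat.log (Fintype.card Fq) (e + 1)))⁻¹
  else 0

/-- The Bernoulli-Carlitz numbers, defined by `z/e_C(z) = ∑_n (BC_n/Π(n)) z^n`. -/
def bernoulliCarlitz (Fq : Type*) [Field Fq] [Fintype Fq] (n : ℕ) : RatFunc Fq :=
  carlitzPi Fq n *
    PowerSeries.coeff n (PowerSeries.mk (carlitzExpCoeff Fq))⁻¹

/- ### Auxiliary lemmas -/

private lemma digits_card_pow (q n : ℕ) (hq : 1 < q) :
    Nat.digits q (q ^ n) = List.replicate n 0 ++ [1] := by
  have h1 : Nat.digits q 1 = [1] := by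
    rw [Nat.digits_def' hq one_pos, Nat.mod_eq_of_lt hq, Nat.div_eq_of_lt hq]
    simp
  have h := Nat.digits_base_pow_mul (b := q) (k := n) (m := 1) hq one_pos
  rw [mul_one] at h
  rw [h, h1]

private lemma carlitzPi_card_pow (Fq : Type*) [Field Fq] [Fintype Fq] (n : ℕ) :
    carlitzPi Fq ((Fintype.card Fq) ^ n) = carlitzD Fq n := by
  have hq : 1 < Fintype.card Fq := Fintype.one_lt_card
  rw [carlitzPi, digits_card_pow _ n hq]
  rw [Finset.prod_eq_single n]
  · have h1 : (List.replicate n (0:ℕ) ++ [1]).getD n 0 = 1 := by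
      rw [List.getD_append_right _ _ _ _ (by simp)]
      simp
    rw [h1, pow_one]
  · intro j _ hj
    rcases lt_or_gt_of_ne hj with h | h
    · rw [List.getD_append _ _ _ _ (by simpa using h)]
      simp [List.getD_eq_getElem?_getD, h]
    · rw [List.getD_eq_default _ _ (by simp; omega)]
      simp
  · intro h
    exact absurd (Finset.mem_range.mpr (Nat.lt_succ_of_lt (Nat.lt_pow_self (n := n) hq))) h

private lemma carlitzExpCoeff_zero (Fq : Type*) [Field Fq] [Fintype Fq] :
    carlitzExpCoeff Fq 0 = 1 := by
  rw [carlitzExpCoeff]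
  simp [Nat.log_one_right, carlitzD]

private lemma coeff_carlitz_g (Fq : Type*) [Field Fq] [Fintype Fq] (e : ℕ) :
    PowerSeries.coeff e (PowerSeries.mk (carlitzExpCoeff Fq) - 1) =
      if e = 0 then 0 else carlitzExpCoeff Fq e := by
  rw [map_sub, PowerSeries.coeff_mk, PowerSeries.coeff_one]
  rcases eq_or_ne e 0 with rfl | he
  · simp [carlitzExpCoeff_zero]
  · simp [he]

private def backTuple (q k : ℕ) (v : Fin k → ℕ) : ℕ →₀ ℕ :=
  Finsupp.onFinset (Finset.range k) (fun j => if h : j < k then q ^ v ⟨j, h⟩ - 1 else 0)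
    (fun a ha => Finset.mem_range.mpr (by by_contra hcon; exact ha (dif_neg hcon)))

private lemma backTuple_apply (q k : ℕ) (v : Fin k → ℕ) (t : Fin k) :
    backTuple q k v ↑t = q ^ v t - 1 := by
  rw [backTuple, Finsupp.onFinset_apply, dif_pos t.isLt]

private lemma backTuple_apply_of_ge (q k : ℕ) (v : Fin k → ℕ) (j : ℕ) (h : ¬ j < k) :
    backTuple q k v j = 0 := by
  rw [backTuple, Finsupp.onFinset_apply, dif_neg h]

private lemma backTuple_support (q k : ℕ) (v : Fin k → ℕ) :
    (backTuple q k v).support ⊆ Finset.range k :=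
  Finsupp.support_onFinset_subset

private lemma coeff_carlitz_g_pow (Fq : Type*) [Field Fq] [Fintype Fq] (m k : ℕ) :
    PowerSeries.coeff m ((PowerSeries.mk (carlitzExpCoeff Fq) - 1) ^ k) =
      ∑ i ∈ (Fintype.piFinset fun _ : Fin k => Finset.range (m + k + 1)).filter
          (fun i => (∑ t, (Fintype.card Fq) ^ i t = m + k) ∧
            ∀ t, 1 < (Fintype.card Fq) ^ i t),
        ∏ t, (carlitzPi Fq ((Fintype.card Fq) ^ i t))⁻¹ := by
  classical
  have hq : 1 < Fintype.card Fq := Fintype.one_lt_card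
  set q := Fintype.card Fq with hqdef
  rw [PowerSeries.coeff_pow]
  rw [← Finset.sum_filter_of_ne
      (p := fun l : ℕ →₀ ℕ => ∀ j ∈ Finset.range k,
        q ^ Nat.log q (l j + 1) = l j + 1 ∧ l j ≠ 0)
      (fun l _ hne j hj => by
        by_contra hc
        apply hne
        apply Finset.prod_eq_zero hj
        rw [coeff_carlitz_g]
        rcases eq_or_ne (l j) 0 with h0 | h0
        · simp [h0]
        · rw [if_neg h0, carlitzExpCoeff, if_neg]
          intro hA
          exact h0 (not_not.mp (not_and.mp hc hA)))]
  refine Finset.sum_nbij' (i := fun l : ℕ →₀ ℕ => fun t : Fin k => Nat.log q (l ↑t + 1))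
    (j := backTuple q k) ?_ ?_ ?_ ?_ ?_
  · -- forward membership
    intro l hl
    rw [Finset.mem_filter, Finset.mem_finsuppAntidiag] at hl
    obtain ⟨⟨hsum, hsupp⟩, hP⟩ := hl
    have hPt : ∀ t : Fin k, q ^ Nat.log q (l ↑t + 1) = l ↑t + 1 ∧ l ↑t ≠ 0 :=
      fun t => hP ↑t (Finset.mem_range.mpr t.isLt)
    beta_reduce
    rw [Finset.mem_filter]
    refine ⟨?_, ?_, ?_⟩
    · rw [Fintype.mem_piFinset]
      intro t
      rw [Finset.mem_range]
      have h1 : Nat.log q (l ↑t + 1) < q ^ Nat.log q (l ↑t + 1) := Nat.lt_pow_self hq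
      have h2 : l ↑t ≤ m := hsum ▸ Finset.single_le_sum
        (f := fun j => l j) (fun j _ => Nat.zero_le _) (Finset.mem_range.mpr t.isLt)
      have h3 := (hPt t).1
      omega
    · calc ∑ t : Fin k, q ^ Nat.log q (l ↑t + 1) = ∑ t : Fin k, (l ↑t + 1) :=
            Finset.sum_congr rfl (fun t _ => (hPt t).1)
        _ = ∑ j ∈ Finset.range k, (l j + 1) := Fin.sum_univ_eq_sum_range (fun j => l j + 1) k
        _ = m + k := by
            rw [Finset.sum_add_distrib, hsum, Finset.sum_const, Finset.card_range, smul_eq_mul,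
              mul_one]
    · intro t
      show 1 < q ^ Nat.log q (l ↑t + 1)
      have h1 := (hPt t).1
      have h2 := (hPt t).2
      omega
  · -- backward membership
    intro v hv
    rw [Finset.mem_filter, Fintype.mem_piFinset] at hv
    obtain ⟨hrange, hsum, hgt⟩ := hv
    rw [Finset.mem_filter, Finset.mem_finsuppAntidiag]
    refine ⟨⟨?_, backTuple_support q k v⟩, ?_⟩
    · have hLsum : ∑ j ∈ Finset.range k, backTuple q k v j = ∑ t : Fin k, (q ^ v t - 1) := by
        rw [← Fin.sum_univ_eq_sum_range (fun j => backTuple q k v j) k]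
        exact Finset.sum_congr rfl fun t _ => backTuple_apply q k v t
      have hs3 : ∑ t : Fin k, ((q ^ v t - 1) + 1) = m + k :=
        (Finset.sum_congr rfl fun t _ => Nat.sub_add_cancel (hgt t).le).trans hsum
      have hs4 : ∑ t : Fin k, ((q ^ v t - 1) + 1) = (∑ t : Fin k, (q ^ v t - 1)) + k := by
        rw [Finset.sum_add_distrib, Finset.sum_const, Finset.card_univ, Fintype.card_fin,
          smul_eq_mul, mul_one]
      have h6 : (∑ t : Fin k, (q ^ v t - 1)) = m := by omega
      exact hLsum.trans h6
    · intro j hj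
      have hjk := Finset.mem_range.mp hj
      rw [backTuple, Finsupp.onFinset_apply, dif_pos hjk]
      have h1 : 1 < q ^ v ⟨j, hjk⟩ := hgt _
      rw [Nat.sub_add_cancel h1.le, Nat.log_pow hq]
      exact ⟨rfl, by omega⟩
  · -- left inverse
    intro l hl
    rw [Finset.mem_filter, Finset.mem_finsuppAntidiag] at hl
    obtain ⟨⟨hsum, hsupp⟩, hP⟩ := hl
    beta_reduce
    ext a
    by_cases h : a < k
    · rw [backTuple, Finsupp.onFinset_apply, dif_pos h]
      have h1 := (hP a (Finset.mem_range.mpr h)).1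
      simp only [Fin.val_mk] at *
      omega
    · rw [backTuple_apply_of_ge q k _ a h]
      symm
      rw [← Finsupp.notMem_support_iff]
      intro hmem
      exact h (Finset.mem_range.mp (hsupp hmem))
  · -- right inverse
    intro v hv
    rw [Finset.mem_filter, Fintype.mem_piFinset] at hv
    obtain ⟨hrange, hsum, hgt⟩ := hv
    beta_reduce
    funext t
    rw [backTuple_apply q k v t]
    have h1 : 1 < q ^ v t := hgt _
    rw [Nat.sub_add_cancel h1.le, Nat.log_pow hq]
  · -- values agree
    intro l hl
    rw [Finset.mem_filter, Finset.mem_finsuppAntidiag] at hl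
    obtain ⟨⟨hsum, hsupp⟩, hP⟩ := hl
    beta_reduce
    rw [← Fin.prod_univ_eq_prod_range
      (fun j => PowerSeries.coeff (l j) (PowerSeries.mk (carlitzExpCoeff Fq) - 1)) k]
    apply Finset.prod_congr rfl
    intro t _
    obtain ⟨hA, h0⟩ := hP ↑t (Finset.mem_range.mpr t.isLt)
    rw [coeff_carlitz_g, if_neg h0, carlitzExpCoeff, if_pos hA, carlitzPi_card_pow]

/-- **Closed form expression for Bernoulli-Carlitz numbers.** -/
theorem bernoulliCarlitz_closedForm (Fq : Type*) [Field Fq] [Fintype Fq]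
    (m : ℕ) (hm : 1 ≤ m) :
    bernoulliCarlitz Fq m =
      carlitzPi Fq m *
        ∑ k ∈ Finset.Icc 1 m, (-1 : RatFunc Fq) ^ k *
          ∑ i ∈ (Fintype.piFinset fun _ : Fin k => Finset.range (m + k + 1)).filter
              (fun i => (∑ t, (Fintype.card Fq) ^ i t = m + k) ∧
                ∀ t, 1 < (Fintype.card Fq) ^ i t),
            ∏ t, (carlitzPi Fq ((Fintype.card Fq) ^ i t))⁻¹ := by
  classical
  rw [bernoulliCarlitz]
  set f : PowerSeries (RatFunc Fq) := PowerSeries.mk (carlitzExpCoeff Fq) with hf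
  set g : PowerSeries (RatFunc Fq) := f - 1 with hg
  have hf0 : PowerSeries.constantCoeff f = 1 := by
    rw [hf, ← PowerSeries.coeff_zero_eq_constantCoeff_apply, PowerSeries.coeff_mk,
      carlitzExpCoeff_zero]
  have hg0 : PowerSeries.constantCoeff g = 0 := by
    rw [hg, map_sub, hf0, map_one, sub_self]
  have hgeom : f * (∑ k ∈ Finset.range (m + 1), (-g) ^ k) = 1 - (-g) ^ (m + 1) := by
    have h := geom_sum_mul (-g) (m + 1)
    have h2 : (-g) - 1 = -f := by rw [hg]; ring
    rw [h2] at h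
    linear_combination -h
  have hz : PowerSeries.coeff m (f⁻¹ * (-g) ^ (m + 1)) = 0 := by
    have hdvd : (PowerSeries.X : PowerSeries (RatFunc Fq)) ^ (m + 1) ∣ f⁻¹ * (-g) ^ (m + 1) :=
      Dvd.dvd.mul_left (pow_dvd_pow_of_dvd
        (PowerSeries.X_dvd_iff.mpr (by rw [map_neg, hg0, neg_zero])) _) _
    exact PowerSeries.X_pow_dvd_iff.mp hdvd m (Nat.lt_succ_self m)
  have hfinv : f⁻¹ * f = 1 := PowerSeries.inv_mul_cancel f (by rw [hf0]; exact one_ne_zero)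
  have hS : (∑ k ∈ Finset.range (m + 1), (-g) ^ k) = f⁻¹ - f⁻¹ * (-g) ^ (m + 1) := by
    calc (∑ k ∈ Finset.range (m + 1), (-g) ^ k)
        = f⁻¹ * (f * (∑ k ∈ Finset.range (m + 1), (-g) ^ k)) := by
          rw [← mul_assoc, hfinv, one_mul]
      _ = f⁻¹ * (1 - (-g) ^ (m + 1)) := by rw [hgeom]
      _ = f⁻¹ - f⁻¹ * (-g) ^ (m + 1) := by ring
  have hcoeff : PowerSeries.coeff m f⁻¹
      = ∑ k ∈ Finset.range (m + 1), PowerSeries.coeff m ((-g) ^ k) := by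
    have h := congrArg (PowerSeries.coeff m) hS
    rw [map_sub, hz, sub_zero, map_sum] at h
    exact h.symm
  congr 1
  rw [hcoeff]
  rw [← Finset.sum_subset (s₁ := Finset.Icc 1 m) (s₂ := Finset.range (m + 1))
      (fun k hk => Finset.mem_range.mpr (by have := Finset.mem_Icc.mp hk; omega))
      (fun k hk hk2 => by
        have hk0 : k = 0 := by
          have h1 := Finset.mem_range.mp hk
          simp only [Finset.mem_Icc, not_and, not_le] at hk2
          omega
        subst hk0
        simp [PowerSeries.coeff_one, Nat.one_le_iff_ne_zero.mp hm])]
  apply Finset.sum_congr rfl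
  intro k hk
  have hneg : (-g) ^ k = PowerSeries.C ((-1) ^ k) * g ^ k := by
    rw [neg_pow, map_pow, map_neg, map_one]
  rw [hneg, PowerSeries.coeff_C_mul, hg, hf, coeff_carlitz_g_pow]
end
end

section
/- For every m ≥ 1, the Cauchy-Carlitz numbers satisfy CC_m = (−1)^m Π(m) · det A, where A is the m×m lower Hessenberg matrix over k with entries A_{i,j} = δ**_{i−j+1} for 1 ≤ j ≤ i ≤ m, A_{i,i+1} = 1 for 1 ≤ i ≤ m−1, and A_{i,j} = 0 for j > i+1; here δ**_e = (−1)^n/L_n if e = r^n − 1 for some nonnegative integer n, and δ**_e = 0 otherwise. -/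
noncomputable section


/-- `L_0 = 1`, `L_i = [i]·[i-1] ⋯ [1]`. -/
def carlitzL (Fq : Type*) [Field Fq] [Fintype Fq] : ℕ → RatFunc Fq
  | 0 => 1
  | i + 1 => carlitzBracket Fq (i + 1) * carlitzL Fq i

/-- `δ**_e = (-1)^n/L_n` if `e = r^n - 1` for some nonnegative integer `n`, and `0`
otherwise. -/
def deltaStarStar (Fq : Type*) [Field Fq] [Fintype Fq] (e : ℕ) : RatFunc Fq :=
  if (Fintype.card Fq) ^ (Nat.log (Fintype.card Fq) (e + 1)) = e + 1 then
    (-1) ^ (Nat.log (Fintype.card Fq) (e + 1)) /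
      carlitzL Fq (Nat.log (Fintype.card Fq) (e + 1))
  else 0

/-- The Cauchy-Carlitz numbers, defined by `z/log_C(z) = ∑_n (CC_n/Π(n)) z^n`, where
`log_C(z)/z = ∑_e δ**_e z^e`. -/
def cauchyCarlitz (Fq : Type*) [Field Fq] [Fintype Fq] (n : ℕ) : RatFunc Fq :=
  carlitzPi Fq n * PowerSeries.coeff n (PowerSeries.mk (deltaStarStar Fq))⁻¹



section Hessenberg

variable {R : Type*} [CommRing R]

/-- The lower Hessenberg matrix attached to a sequence `a`. -/
def hessMat (a : ℕ → R) (m : ℕ) : Matrix (Fin m) (Fin m) R :=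
  Matrix.of fun i j : Fin m =>
    if (j : ℕ) = (i : ℕ) + 1 then 1
    else if (j : ℕ) ≤ (i : ℕ) then a ((i : ℕ) - (j : ℕ) + 1)
    else 0

lemma hessMat_minor (a : ℕ → R) (n : ℕ) (i : Fin (n + 1)) :
    ((hessMat a (n + 1)).submatrix i.succAbove Fin.succ).det
      = (hessMat a (n - (i : ℕ))).det := by
  have hk : (i : ℕ) ≤ n := Nat.lt_succ_iff.mp i.isLt
  have hkn : (i : ℕ) + (n - (i : ℕ)) = n := Nat.add_sub_cancel' hk
  set k := (i : ℕ) with hkdef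
  let e : Fin k ⊕ Fin (n - k) ≃ Fin n := finSumFinEquiv.trans (finCongr hkn)
  have he1 : ∀ s : Fin k, ((e (Sum.inl s) : Fin n) : ℕ) = (s : ℕ) := by
    intro s; simp [e, finSumFinEquiv_apply_left]
  have he2 : ∀ t : Fin (n - k), ((e (Sum.inr t) : Fin n) : ℕ) = k + (t : ℕ) := by
    intro t; simp [e, finSumFinEquiv_apply_right]
  have hlt : ∀ r : Fin n, (r : ℕ) < k → ((i.succAbove r : Fin (n + 1)) : ℕ) = (r : ℕ) := by
    intro r hr
    rw [Fin.succAbove_of_castSucc_lt]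
    · rfl
    · exact (Fin.lt_iff_val_lt_val).mpr hr
  have hge : ∀ r : Fin n, k ≤ (r : ℕ) → ((i.succAbove r : Fin (n + 1)) : ℕ) = (r : ℕ) + 1 := by
    intro r hr
    rw [Fin.succAbove_of_le_castSucc]
    · rfl
    · exact (Fin.le_iff_val_le_val).mpr hr
  rw [← Matrix.det_submatrix_equiv_self e]
  have hB : (((hessMat a (n + 1)).submatrix i.succAbove Fin.succ).submatrix e e)
      = Matrix.fromBlocks
          (Matrix.of fun s t : Fin k =>
            if (t : ℕ) = (s : ℕ) then 1
            else if (t : ℕ) < (s : ℕ) then a ((s : ℕ) - (t : ℕ)) else 0)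
          0
          (Matrix.of fun (s : Fin (n - k)) (t : Fin k) => a (k + (s : ℕ) - (t : ℕ) + 1))
          (hessMat a (n - k)) := by
    ext r c
    rcases r with s | s <;> rcases c with t | t <;>
      simp only [Matrix.submatrix_apply, Matrix.fromBlocks_apply₁₁,
        Matrix.fromBlocks_apply₁₂, Matrix.fromBlocks_apply₂₁, Matrix.fromBlocks_apply₂₂,
        Matrix.zero_apply, Matrix.of_apply]
    · -- inl inl
      show (if ((e (Sum.inl t)).succ : ℕ) = ((i.succAbove (e (Sum.inl s)) : Fin (n+1)) : ℕ) + 1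
            then (1 : R)
            else if ((e (Sum.inl t)).succ : ℕ) ≤ ((i.succAbove (e (Sum.inl s)) : Fin (n+1)) : ℕ)
            then a (((i.succAbove (e (Sum.inl s)) : Fin (n+1)) : ℕ) - ((e (Sum.inl t)).succ : ℕ) + 1)
            else 0) = _
      rw [Fin.val_succ, hlt _ (by rw [he1]; exact s.isLt)]
      simp only [he1]
      split_ifs with h1 h2 h3 h4 h5 <;> try omega
      · rfl
      · congr 1; omega
      · rfl
    · -- inl inr
      show (if ((e (Sum.inr t)).succ : ℕ) = ((i.succAbove (e (Sum.inl s)) : Fin (n+1)) : ℕ) + 1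
            then (1 : R)
            else if ((e (Sum.inr t)).succ : ℕ) ≤ ((i.succAbove (e (Sum.inl s)) : Fin (n+1)) : ℕ)
            then a (((i.succAbove (e (Sum.inl s)) : Fin (n+1)) : ℕ) - ((e (Sum.inr t)).succ : ℕ) + 1)
            else 0) = 0
      rw [Fin.val_succ, hlt _ (by rw [he1]; exact s.isLt)]
      simp only [he1, he2]
      have hs := s.isLt
      rw [if_neg (by omega), if_neg (by omega)]
    · -- inr inl
      show (if ((e (Sum.inl t)).succ : ℕ) = ((i.succAbove (e (Sum.inr s)) : Fin (n+1)) : ℕ) + 1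
            then (1 : R)
            else if ((e (Sum.inl t)).succ : ℕ) ≤ ((i.succAbove (e (Sum.inr s)) : Fin (n+1)) : ℕ)
            then a (((i.succAbove (e (Sum.inr s)) : Fin (n+1)) : ℕ) - ((e (Sum.inl t)).succ : ℕ) + 1)
            else 0) = a (k + (s : ℕ) - (t : ℕ) + 1)
      rw [Fin.val_succ, hge _ (by rw [he2]; omega)]
      simp only [he1, he2]
      have ht := t.isLt
      rw [if_neg (by omega), if_pos (by omega)]
      congr 1; omega
    · -- inr inr
      show (if ((e (Sum.inr t)).succ : ℕ) = ((i.succAbove (e (Sum.inr s)) : Fin (n+1)) : ℕ) + 1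
            then (1 : R)
            else if ((e (Sum.inr t)).succ : ℕ) ≤ ((i.succAbove (e (Sum.inr s)) : Fin (n+1)) : ℕ)
            then a (((i.succAbove (e (Sum.inr s)) : Fin (n+1)) : ℕ) - ((e (Sum.inr t)).succ : ℕ) + 1)
            else 0)
          = (if (t : ℕ) = (s : ℕ) + 1 then (1 : R)
            else if (t : ℕ) ≤ (s : ℕ) then a ((s : ℕ) - (t : ℕ) + 1) else 0)
      rw [Fin.val_succ, hge _ (by rw [he2]; omega)]
      simp only [he1, he2]
      split_ifs with h1 h2 h3 h4 h5 <;> try omega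
      · rfl
      · congr 1; omega
      · rfl
  rw [hB, Matrix.det_fromBlocks_zero₁₂]
  have hBdet : (Matrix.of fun s t : Fin k =>
      if (t : ℕ) = (s : ℕ) then (1 : R)
      else if (t : ℕ) < (s : ℕ) then a ((s : ℕ) - (t : ℕ)) else 0).det = 1 := by
    rw [Matrix.det_of_lowerTriangular]
    · simp
    · intro p q h
      have : (p : ℕ) < (q : ℕ) := h
      simp only [Matrix.of_apply]
      rw [if_neg (by omega), if_neg (by omega)]
  rw [hBdet, one_mul]

lemma hessMat_det_succ (a : ℕ → R) (n : ℕ) :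
    (hessMat a (n + 1)).det
      = ∑ i : Fin (n + 1),
          (-1 : R) ^ (i : ℕ) * a ((i : ℕ) + 1) * (hessMat a (n - (i : ℕ))).det := by
  rw [Matrix.det_succ_column_zero]
  refine Finset.sum_congr rfl fun i _ => ?_
  rw [hessMat_minor]
  congr 2

/-- Signed Hessenberg determinants. -/
def dseq (a : ℕ → R) (m : ℕ) : R := (-1) ^ m * (hessMat a m).det

lemma dseq_zero (a : ℕ → R) : dseq a 0 = 1 := by
  simp [dseq, Matrix.det_fin_zero]

lemma dseq_succ (a : ℕ → R) (n : ℕ) :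
    dseq a (n + 1) = -∑ j ∈ Finset.range (n + 1), a (j + 1) * dseq a (n - j) := by
  rw [dseq, hessMat_det_succ, Finset.mul_sum, ← Fin.sum_univ_eq_sum_range, ← Finset.sum_neg_distrib]
  refine Finset.sum_congr rfl fun i _ => ?_
  rw [dseq]
  have hi : (i : ℕ) ≤ n := Nat.lt_succ_iff.mp i.isLt
  have hsgn : (-1 : R) ^ (n + 1) * (-1 : R) ^ (i : ℕ) = -(-1 : R) ^ (n - (i : ℕ)) := by
    rw [← pow_add]
    have h1 : n + 1 + (i : ℕ) = (n - (i : ℕ)) + (2 * (i : ℕ) + 1) := by omega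
    rw [h1, pow_add]
    have h2 : (-1 : R) ^ (2 * (i : ℕ) + 1) = -1 := Odd.neg_one_pow ⟨(i : ℕ), by omega⟩
    rw [h2, mul_neg_one]
  calc (-1 : R) ^ (n + 1) * ((-1 : R) ^ (i : ℕ) * a ((i : ℕ) + 1) * (hessMat a (n - (i : ℕ))).det)
      = ((-1 : R) ^ (n + 1) * (-1 : R) ^ (i : ℕ)) * (a ((i : ℕ) + 1) * (hessMat a (n - (i : ℕ))).det) := by ring
    _ = -(a ((i : ℕ) + 1) * ((-1 : R) ^ (n - (i : ℕ)) * (hessMat a (n - (i : ℕ))).det)) := by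
        rw [hsgn]; ring

lemma mk_mul_mk_dseq (a : ℕ → R) (ha : a 0 = 1) :
    PowerSeries.mk a * PowerSeries.mk (dseq a) = 1 := by
  ext n
  rw [PowerSeries.coeff_mul]
  cases n with
  | zero =>
    simp [dseq_zero, ha]
  | succ n =>
    rw [Finset.Nat.sum_antidiagonal_eq_sum_range_succ_mk]
    simp only [PowerSeries.coeff_mk]
    rw [Finset.sum_range_succ']
    simp only [Nat.succ_sub_succ, Nat.sub_zero, ha, one_mul]
    rw [dseq_succ]
    simp [PowerSeries.coeff_one]

lemma mk_inv_coeff {K : Type*} [Field K] (a : ℕ → K) (ha : a 0 = 1) (m : ℕ) :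
    PowerSeries.coeff m (PowerSeries.mk a)⁻¹ = dseq a m := by
  have h0 : PowerSeries.constantCoeff (PowerSeries.mk a) ≠ 0 := by
    rw [PowerSeries.constantCoeff_mk, ha]; exact one_ne_zero
  have : (PowerSeries.mk a)⁻¹ = PowerSeries.mk (dseq a) := by
    rw [PowerSeries.inv_eq_iff_mul_eq_one h0, mul_comm]
    exact mk_mul_mk_dseq a ha
  rw [this, PowerSeries.coeff_mk]

end Hessenberg


/-- **Determinant expression of Cauchy-Carlitz numbers.**  For every `m ≥ 1`,
`CC_m = (-1)^m Π(m) det A`, where `A` is the `m × m` lower Hessenberg matrix with entries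
`A_{i,j} = δ**_{i-j+1}` for `j ≤ i`, `A_{i,i+1} = 1`, and `A_{i,j} = 0` otherwise. -/
theorem cauchyCarlitz_det (Fq : Type*) [Field Fq] [Fintype Fq]
    (m : ℕ) (hm : 1 ≤ m) :
    cauchyCarlitz Fq m = (-1 : RatFunc Fq) ^ m * carlitzPi Fq m *
      Matrix.det (Matrix.of fun i j : Fin m =>
        if (j : ℕ) = (i : ℕ) + 1 then 1
        else if (j : ℕ) ≤ (i : ℕ) then deltaStarStar Fq ((i : ℕ) - (j : ℕ) + 1)
        else 0) := by
  have ha0 : deltaStarStar Fq 0 = 1 := by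
    have hlog : Nat.log (Fintype.card Fq) 1 = 0 := Nat.log_one_right _
    simp [deltaStarStar, hlog, carlitzL]
  have hcoeff := mk_inv_coeff (deltaStarStar Fq) ha0 m
  rw [cauchyCarlitz, hcoeff, dseq]
  have hM : hessMat (deltaStarStar Fq) m
      = Matrix.of (fun i j : Fin m =>
          if (j : ℕ) = (i : ℕ) + 1 then (1 : RatFunc Fq)
          else if (j : ℕ) ≤ (i : ℕ) then deltaStarStar Fq ((i : ℕ) - (j : ℕ) + 1)
          else 0) := rfl
  rw [← hM]
  ring
end
end

section
/- Let F be a field, let f ∈ F[[z]] have nonzero constant term (so that 1/f ∈ F[[z]]), and let m ≥ 1. Then H^{(m)}(1/f) = Σ_{k=1}^{m} C(m+1, k+1) · ((−1)^k / f^{k+1}) · Σ_{i_1+⋯+i_k = m, i_1,…,i_k ≥ 0} H^{(i_1)}(f) ⋯ H^{(i_k)}(f), where C(m+1,k+1) is the binomial coefficient interpreted in F via the natural map ℕ → F. -/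
noncomputable section

/-- The Hasse-Teichmüller derivative of order `m`: it sends `∑_{n} c_n z^n` to
`∑_{n ≥ m} c_n · C(n, m) · z^(n-m)`, i.e. its `n`-th coefficient is `C(n+m, m) · c_{n+m}`. -/
def hasseDeriv (F : Type*) [Field F] (m : ℕ) (f : PowerSeries F) : PowerSeries F :=
  PowerSeries.mk fun n => ((n + m).choose m : F) * PowerSeries.coeff (n + m) f

namespace HasseAux

open Finset PowerSeries

variable {F : Type*} [Field F]

lemma coeff_hasseDeriv (m n : ℕ) (f : PowerSeries F) :
    PowerSeries.coeff n (hasseDeriv F m f) =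
      ((n + m).choose m : F) * PowerSeries.coeff (n + m) f :=
  PowerSeries.coeff_mk _ _

lemma hasseDeriv_zero' (f : PowerSeries F) : hasseDeriv F 0 f = f := by
  ext n
  simp [hasseDeriv]

/-- Reindexing lemma: extending a sum over `antidiagonal n` (shifted by `(i,j)`) to a sum over
`antidiagonal (n + m)`, the extra terms vanishing because of the binomial coefficients. -/
lemma key {i j m : ℕ} (hij : i + j = m) (f g : PowerSeries F) (n : ℕ) :
    ∑ ab ∈ Finset.HasAntidiagonal.antidiagonal (n + m),
      ((ab.1.choose i : F) * PowerSeries.coeff ab.1 f) *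
        ((ab.2.choose j : F) * PowerSeries.coeff ab.2 g)
    = ∑ cd ∈ Finset.HasAntidiagonal.antidiagonal n,
        (((cd.1 + i).choose i : F) * PowerSeries.coeff (cd.1 + i) f) *
          (((cd.2 + j).choose j : F) * PowerSeries.coeff (cd.2 + j) g) := by
  have hinj : Function.Injective (fun cd : ℕ × ℕ => (cd.1 + i, cd.2 + j)) := by
    intro a b h
    simp only [Prod.mk.injEq, Prod.ext_iff] at h ⊢
    omega
  have h1 : ∑ ab ∈ (Finset.HasAntidiagonal.antidiagonal n).map ⟨fun cd => (cd.1 + i, cd.2 + j), hinj⟩,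
      (((ab.1.choose i : F) * PowerSeries.coeff ab.1 f) *
        ((ab.2.choose j : F) * PowerSeries.coeff ab.2 g))
      = ∑ ab ∈ Finset.HasAntidiagonal.antidiagonal (n + m),
        (((ab.1.choose i : F) * PowerSeries.coeff ab.1 f) *
          ((ab.2.choose j : F) * PowerSeries.coeff ab.2 g)) := by
    refine Finset.sum_subset ?_ ?_
    · intro ab hab
      simp only [Finset.mem_map, Function.Embedding.coeFn_mk] at hab
      obtain ⟨cd, hcd, rfl⟩ := hab
      rw [Finset.HasAntidiagonal.mem_antidiagonal] at hcd ⊢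
      simp only
      omega
    · rintro ⟨a, b⟩ hab hnot
      rw [Finset.HasAntidiagonal.mem_antidiagonal] at hab
      simp only at hab
      have hor : a < i ∨ b < j := by
        by_contra hcon
        push_neg at hcon
        apply hnot
        simp only [Finset.mem_map, Finset.HasAntidiagonal.mem_antidiagonal, Function.Embedding.coeFn_mk]
        refine ⟨(a - i, b - j), ?_, ?_⟩
        · show a - i + (b - j) = n
          omega
        · show (a - i + i, b - j + j) = (a, b)
          rw [Prod.mk.injEq]
          constructor <;> omega
      rcases hor with h | h
      · rw [Nat.choose_eq_zero_of_lt h]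
        simp
      · rw [Nat.choose_eq_zero_of_lt h]
        simp
  rw [← h1, Finset.sum_map]
  simp only [Function.Embedding.coeFn_mk]

/-- Leibniz rule for the Hasse derivative of power series. -/
lemma hasseDeriv_mul (f g : PowerSeries F) (m : ℕ) :
    hasseDeriv F m (f * g) =
      ∑ ij ∈ Finset.HasAntidiagonal.antidiagonal m, hasseDeriv F ij.1 f * hasseDeriv F ij.2 g := by
  ext n
  rw [map_sum, coeff_hasseDeriv, PowerSeries.coeff_mul, Finset.mul_sum]
  have lhs : ∀ ab ∈ Finset.HasAntidiagonal.antidiagonal (n + m),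
      ((n + m).choose m : F) * (PowerSeries.coeff ab.1 f * PowerSeries.coeff ab.2 g) =
      ∑ ij ∈ Finset.HasAntidiagonal.antidiagonal m,
        ((ab.1.choose ij.1 : F) * PowerSeries.coeff ab.1 f) *
          ((ab.2.choose ij.2 : F) * PowerSeries.coeff ab.2 g) := by
    intro ab hab
    rw [Finset.HasAntidiagonal.mem_antidiagonal] at hab
    have hch : ((n + m).choose m : F) =
        ∑ ij ∈ Finset.HasAntidiagonal.antidiagonal m, (ab.1.choose ij.1 : F) * (ab.2.choose ij.2 : F) := by
      rw [← hab, Nat.add_choose_eq]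
      push_cast
      rfl
    rw [hch, Finset.sum_mul]
    exact Finset.sum_congr rfl fun ij _ => by ring
  rw [Finset.sum_congr rfl lhs, Finset.sum_comm]
  refine Finset.sum_congr rfl fun ij hij => ?_
  rw [Finset.HasAntidiagonal.mem_antidiagonal] at hij
  rw [PowerSeries.coeff_mul, key hij f g n]
  refine Finset.sum_congr rfl fun cd _ => ?_
  rw [coeff_hasseDeriv, coeff_hasseDeriv]

/-- The "Taylor expansion" map `f ↦ ∑_m H^(m)(f) t^m`. -/
def phi (f : PowerSeries F) : PowerSeries (PowerSeries F) :=
  PowerSeries.mk fun m => hasseDeriv F m f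

lemma coeff_phi (m : ℕ) (f : PowerSeries F) :
    PowerSeries.coeff m (phi f) = hasseDeriv F m f :=
  PowerSeries.coeff_mk _ _

lemma phi_one : phi (1 : PowerSeries F) = 1 := by
  apply PowerSeries.ext
  intro m
  rw [coeff_phi]
  apply PowerSeries.ext
  intro n
  rw [coeff_hasseDeriv]
  rcases Nat.eq_zero_or_pos m with rfl | hm
  · simp
  · have h1 : n + m ≠ 0 := by omega
    rw [PowerSeries.coeff_one, if_neg h1, mul_zero,
      PowerSeries.coeff_one, if_neg (by omega : ¬ m = 0), map_zero]

lemma phi_mul (f g : PowerSeries F) : phi (f * g) = phi f * phi g := by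
  ext m
  rw [coeff_phi, PowerSeries.coeff_mul, hasseDeriv_mul]
  simp only [coeff_phi]

lemma constantCoeff_phi (f : PowerSeries F) :
    PowerSeries.constantCoeff (phi f) = f := by
  rw [← PowerSeries.coeff_zero_eq_constantCoeff_apply, coeff_phi, hasseDeriv_zero']

/-- Coefficient of a power of a power series as a sum over `antidiagonalTuple`. -/
lemma coeff_pow_tuple {R : Type*} [CommSemiring R] (φ : PowerSeries R) (k n : ℕ) :
    PowerSeries.coeff n (φ ^ k) =
      ∑ x ∈ Finset.Nat.antidiagonalTuple k n, ∏ i, PowerSeries.coeff (x i) φ := by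
  classical
  have h : (∏ _i : Fin k, φ) = φ ^ k := by
    rw [Finset.prod_const, Finset.card_univ, Fintype.card_fin]
  rw [← h, PowerSeries.coeff_prod]
  refine Finset.sum_nbij' (fun l => ⇑l) (fun x => Finsupp.equivFunOnFinite.symm x) ?_ ?_ ?_ ?_ ?_
  · intro l hl
    rw [Finset.mem_finsuppAntidiag] at hl
    rw [Finset.Nat.mem_antidiagonalTuple]
    exact hl.1
  · intro x hx
    rw [Finset.Nat.mem_antidiagonalTuple] at hx
    rw [Finset.mem_finsuppAntidiag]
    refine ⟨?_, Finset.subset_univ _⟩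
    simpa using hx
  · intro l _
    exact Finsupp.equivFunOnFinite.symm_apply_apply l
  · intro x _
    rfl
  · intro l _
    rfl

lemma inv_pow' (f : PowerSeries F) (hf : PowerSeries.constantCoeff f ≠ 0) (k : ℕ) :
    (f ^ k)⁻¹ = (f⁻¹) ^ k := by
  symm
  rw [PowerSeries.eq_inv_iff_mul_eq_one (by rw [map_pow]; exact pow_ne_zero _ hf)]
  rw [← mul_pow, mul_comm f⁻¹ f, PowerSeries.mul_inv_cancel f hf, one_pow]

end HasseAux

open HasseAux Finset PowerSeries in
/-- **Quotient rule for Hasse-Teichmüller derivatives (second form).**  For `f ∈ F[[z]]` with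
nonzero constant term and `m ≥ 1`,
`H^(m)(1/f) = ∑_{k=1}^m C(m+1,k+1) ((-1)^k/f^(k+1)) ∑_{i_1+⋯+i_k=m, i_t ≥ 0}
H^(i_1)(f) ⋯ H^(i_k)(f)`, where `C(m+1,k+1)` is taken in `F` via the natural map `ℕ → F`. -/
theorem hasseDeriv_inv' (F : Type*) [Field F] (f : PowerSeries F)
    (hf : PowerSeries.constantCoeff f ≠ 0) (m : ℕ) (hm : 1 ≤ m) :
    hasseDeriv F m f⁻¹ =
      ∑ k ∈ Finset.Icc 1 m,
        PowerSeries.C (((m + 1).choose (k + 1) : ℕ) : F) *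
          ((-1 : PowerSeries F) ^ k * (f ^ (k + 1))⁻¹) *
          ∑ x ∈ Finset.Nat.antidiagonalTuple k m, ∏ i, hasseDeriv F (x i) f := by
  classical
  have hfinv : f * f⁻¹ = 1 := PowerSeries.mul_inv_cancel f hf
  have hgh : phi f * phi f⁻¹ = 1 := by rw [← phi_mul, hfinv, phi_one]
  set w : PowerSeries (PowerSeries F) := 1 - PowerSeries.C f⁻¹ * phi f with hw
  have hconst : PowerSeries.constantCoeff w = 0 := by
    rw [hw, map_sub, map_one, map_mul, PowerSeries.constantCoeff_C, constantCoeff_phi]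
    rw [mul_comm f f⁻¹] at hfinv
    rw [hfinv, sub_self]
  have hXw : (PowerSeries.X : PowerSeries (PowerSeries F)) ∣ w := PowerSeries.X_dvd_iff.mpr hconst
  have hgeom : (1 - w) * ∑ k ∈ Finset.range (m + 1), w ^ k = 1 - w ^ (m + 1) := by
    have h := geom_sum_mul w (m + 1)
    linear_combination -h
  have h1w : (1 : PowerSeries (PowerSeries F)) - w =
      PowerSeries.C f⁻¹ * phi f := by
    rw [hw]; ring
  have step1 : PowerSeries.C f⁻¹ * ∑ k ∈ Finset.range (m + 1), w ^ k =
      phi f⁻¹ - phi f⁻¹ * w ^ (m + 1) := by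
    linear_combination (phi f⁻¹) * hgeom -
      (∑ k ∈ Finset.range (m + 1), w ^ k) * (phi f⁻¹) * h1w -
      (PowerSeries.C f⁻¹ * ∑ k ∈ Finset.range (m + 1), w ^ k) * hgh
  have hvanish : PowerSeries.coeff m (phi f⁻¹ * w ^ (m + 1)) = 0 := by
    have hd : (PowerSeries.X : PowerSeries (PowerSeries F)) ^ (m + 1) ∣ phi f⁻¹ * w ^ (m + 1) :=
      Dvd.dvd.mul_left (pow_dvd_pow_of_dvd hXw (m + 1)) _
    exact PowerSeries.X_pow_dvd_iff.mp hd m (Nat.lt_succ_self m)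
  have hmain : hasseDeriv F m f⁻¹ =
      f⁻¹ * ∑ k ∈ Finset.range (m + 1), PowerSeries.coeff m (w ^ k) := by
    rw [← coeff_phi m f⁻¹]
    calc PowerSeries.coeff m (phi f⁻¹)
        = PowerSeries.coeff m (phi f⁻¹ - phi f⁻¹ * w ^ (m + 1)) := by
          rw [map_sub, hvanish, sub_zero]
      _ = PowerSeries.coeff m
            (PowerSeries.C f⁻¹ * ∑ k ∈ Finset.range (m + 1), w ^ k) := by
          rw [step1]
      _ = f⁻¹ * ∑ k ∈ Finset.range (m + 1), PowerSeries.coeff m (w ^ k) := by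
          rw [PowerSeries.coeff_C_mul, map_sum]
  have hwk : ∀ k : ℕ, PowerSeries.coeff m (w ^ k) =
      ∑ j ∈ Finset.range (k + 1),
        (k.choose j : PowerSeries F) * ((-1 : PowerSeries F) ^ j * f⁻¹ ^ j *
          PowerSeries.coeff m (phi f ^ j)) := by
    intro k
    have hw' : w ^ k = ∑ j ∈ Finset.range (k + 1),
        (-(PowerSeries.C f⁻¹ * phi f)) ^ j * 1 ^ (k - j) *
          (k.choose j : PowerSeries (PowerSeries F)) := by
      rw [hw, sub_eq_add_neg, add_comm, add_pow]
    rw [hw', map_sum]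
    refine Finset.sum_congr rfl fun j _ => ?_
    have hterm : (-(PowerSeries.C f⁻¹ * phi f)) ^ j * 1 ^ (k - j) *
          (k.choose j : PowerSeries (PowerSeries F))
        = PowerSeries.C
            ((k.choose j : PowerSeries F) * ((-1 : PowerSeries F) ^ j * f⁻¹ ^ j)) * phi f ^ j := by
      rw [map_mul, map_mul, map_pow, map_pow, map_natCast, map_neg, map_one]
      ring
    rw [hterm, PowerSeries.coeff_C_mul]
    ring
  rw [hmain]
  simp_rw [hwk]
  rw [Finset.sum_comm' (s := Finset.range (m + 1)) (t := fun k => Finset.range (k + 1))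
    (s' := fun j => Finset.Icc j m) (t' := Finset.range (m + 1))
    (by intro k j; simp only [Finset.mem_range, Finset.mem_Icc]; omega)]
  have hinner : ∀ j ∈ Finset.range (m + 1),
      ∑ k ∈ Finset.Icc j m,
        (k.choose j : PowerSeries F) * ((-1 : PowerSeries F) ^ j * f⁻¹ ^ j *
          PowerSeries.coeff m (phi f ^ j)) =
      (((m + 1).choose (j + 1) : ℕ) : PowerSeries F) *
        ((-1 : PowerSeries F) ^ j * f⁻¹ ^ j *
          PowerSeries.coeff m (phi f ^ j)) := by
    intro j _
    rw [← Finset.sum_mul, ← Nat.cast_sum, Nat.sum_Icc_choose]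
  rw [Finset.sum_congr rfl hinner]
  have hsplit : Finset.range (m + 1) = insert 0 (Finset.Icc 1 m) := by
    ext x
    simp only [Finset.mem_range, Finset.mem_insert, Finset.mem_Icc]
    omega
  rw [hsplit, Finset.sum_insert (by simp)]
  have hzero0 : PowerSeries.coeff m (phi f ^ 0) = 0 := by
    rw [pow_zero, PowerSeries.coeff_one, if_neg (by omega)]
  rw [hzero0]
  rw [mul_zero, mul_zero, zero_add, Finset.mul_sum]
  refine Finset.sum_congr rfl fun j hj => ?_
  rw [Finset.mem_Icc] at hj
  rw [coeff_pow_tuple]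
  have htup : ∑ x ∈ Finset.Nat.antidiagonalTuple j m,
        ∏ i, PowerSeries.coeff (x i) (phi f)
      = ∑ x ∈ Finset.Nat.antidiagonalTuple j m, ∏ i, hasseDeriv F (x i) f := by
    refine Finset.sum_congr rfl fun x _ => Finset.prod_congr rfl fun i _ => ?_
    rw [coeff_phi]
  rw [htup, inv_pow' f hf (j + 1), map_natCast (PowerSeries.C (R := F)) ((m + 1).choose (j + 1))]
  ring

end
end

section
/- For every m ≥ 1, the classical Cauchy numbers satisfy c_m = (−1)^m · m! · det A, where A is the m×m lower Hessenberg matrix over ℚ with entries A_{i,j} = (−1)^{i−j+1}/(i−j+2) for 1 ≤ j ≤ i ≤ m, A_{i,i+1} = 1 for 1 ≤ i ≤ m−1, and A_{i,j} = 0 for j > i+1. -/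
noncomputable section

/-- The classical Cauchy numbers, defined by `t/log(1+t) = ∑_n c_n t^n/n!`, i.e.
`c_n = n! ·` (coefficient of `t^n` in the inverse of the power series
`log(1+t)/t = ∑_n (-1)^n t^n/(n+1) ∈ ℚ[[t]]`). -/
def cauchyNumber (n : ℕ) : ℚ :=
  (Nat.factorial n : ℚ) *
    PowerSeries.coeff n (PowerSeries.mk fun j => (-1 : ℚ) ^ j / (j + 1))⁻¹

namespace CauchyDetAux

open Finset Matrix

def phi : PowerSeries ℚ := PowerSeries.mk fun j => (-1 : ℚ) ^ j / (j + 1)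

def a (n : ℕ) : ℚ := PowerSeries.coeff n phi
def b (n : ℕ) : ℚ := PowerSeries.coeff n phi⁻¹

lemma a_def (n : ℕ) : a n = (-1 : ℚ) ^ n / ((n : ℚ) + 1) := by
  simp [a, phi]

lemma a_zero : a 0 = 1 := by simp [a_def]

lemma mul_inv : phi * phi⁻¹ = 1 := by
  refine PowerSeries.mul_inv_cancel _ ?_
  have : PowerSeries.constantCoeff phi = 1 := by
    simp [phi]
  rw [this]; norm_num

lemma conv (n : ℕ) :
    ∑ d ∈ Finset.range (n + 1), a (n - d) * b d = if n = 0 then 1 else 0 := by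
  have h := congrArg (PowerSeries.coeff n) mul_inv
  rw [PowerSeries.coeff_mul, Finset.Nat.sum_antidiagonal_eq_sum_range_succ
    (fun i j => (PowerSeries.coeff i phi) * (PowerSeries.coeff j phi⁻¹))] at h
  have key : (∑ d ∈ Finset.range (n + 1), a (n - d) * b d)
      = ∑ k ∈ Finset.range (n + 1), a k * b (n - k) := by
    rw [← Finset.sum_range_reflect (fun k => a k * b (n - k)) (n + 1)]
    refine Finset.sum_congr rfl fun k hk => ?_
    rw [Finset.mem_range] at hk
    have h1 : n + 1 - 1 - k = n - k := by omega
    have h2 : n - (n - k) = k := by omega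
    rw [h1, h2]
  rw [key]
  unfold a b
  rw [Nat.succ_eq_add_one] at h
  rw [h]
  simp [PowerSeries.coeff_one]

/-- lower triangular Toeplitz matrix of `a` -/
def A (m : ℕ) : Matrix (Fin (m + 1)) (Fin (m + 1)) ℚ :=
  Matrix.of fun i j => if (j : ℕ) ≤ (i : ℕ) then a ((i : ℕ) - (j : ℕ)) else 0

def B (m : ℕ) : Matrix (Fin (m + 1)) (Fin (m + 1)) ℚ :=
  Matrix.of fun i j => if (j : ℕ) ≤ (i : ℕ) then b ((i : ℕ) - (j : ℕ)) else 0

lemma AB (m : ℕ) : A m * B m = 1 := by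
  ext i j
  rw [Matrix.mul_apply]
  have hsum : ∀ k : Fin (m + 1),
      A m i k * B m k j =
        (fun t : ℕ => (if t ≤ (i : ℕ) then a ((i : ℕ) - t) else 0) *
          (if (j : ℕ) ≤ t then b (t - (j : ℕ)) else 0)) (k : ℕ) := fun k => rfl
  have hrew : ∑ k : Fin (m + 1), A m i k * B m k j
      = ∑ t ∈ Finset.range (m + 1), (if t ≤ (i : ℕ) then a ((i : ℕ) - t) else 0) *
          (if (j : ℕ) ≤ t then b (t - (j : ℕ)) else 0) :=
    Fin.sum_univ_eq_sum_range (fun t : ℕ => (if t ≤ (i : ℕ) then a ((i : ℕ) - t) else 0) *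
          (if (j : ℕ) ≤ t then b (t - (j : ℕ)) else 0)) (m + 1)
  rw [hrew]
  rcases le_or_gt (j : ℕ) (i : ℕ) with h | h
  · have hsub : Finset.Icc (j : ℕ) (i : ℕ) ⊆ Finset.range (m + 1) := by
      intro x hx
      rw [Finset.mem_Icc] at hx
      rw [Finset.mem_range]
      have := i.isLt
      omega
    rw [← Finset.sum_subset hsub (fun x _ hx => by
      rw [Finset.mem_Icc] at hx
      push_neg at hx
      rcases le_or_gt (j : ℕ) x with hx2 | hx2
      · have hni : ¬ (x ≤ (i : ℕ)) := by omega
        rw [if_neg hni, zero_mul]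
      · have hnj : ¬ ((j : ℕ) ≤ x) := by omega
        rw [if_neg hnj, mul_zero])]
    rw [← Finset.Ico_add_one_right_eq_Icc, Finset.sum_Ico_eq_sum_range]
    have step : ∀ d ∈ Finset.range ((i : ℕ) + 1 - (j : ℕ)),
        (if (j : ℕ) + d ≤ (i : ℕ) then a ((i : ℕ) - ((j : ℕ) + d)) else 0) *
          (if (j : ℕ) ≤ (j : ℕ) + d then b ((j : ℕ) + d - (j : ℕ)) else 0)
        = a ((i : ℕ) - (j : ℕ) - d) * b d := by
      intro d hd
      rw [Finset.mem_range] at hd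
      rw [if_pos (by omega), if_pos (by omega)]
      congr 2 <;> omega
    rw [Finset.sum_congr rfl step]
    have hr : (i : ℕ) + 1 - (j : ℕ) = ((i : ℕ) - (j : ℕ)) + 1 := by omega
    rw [hr, conv]
    by_cases hij : i = j
    · subst hij
      simp
    · have hvij : (i : ℕ) ≠ (j : ℕ) := fun hc => hij (Fin.ext hc)
      rw [if_neg (by omega), Matrix.one_apply_ne hij]
  · rw [Matrix.one_apply_ne (fun hc => by subst hc; omega)]
    refine Finset.sum_eq_zero fun k _ => ?_
    rcases le_or_gt (j : ℕ) k with hk | hk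
    · have hni : ¬ (k ≤ (i : ℕ)) := by omega
      rw [if_neg hni, zero_mul]
    · have hnj : ¬ ((j : ℕ) ≤ k) := by omega
      rw [if_neg hnj, mul_zero]

lemma detA (m : ℕ) : (A m).det = 1 := by
  rw [Matrix.det_of_lowerTriangular (A m)
    (fun i j (hij : _ < _) => by
      simp only [A, Matrix.of_apply]
      exact if_neg (fun hc => absurd hij (not_lt.mpr (Fin.le_def.mpr hc))))]
  refine Finset.prod_eq_one fun i _ => ?_
  simp [A, a_zero]

lemma b_eq_det (m : ℕ) :
    b m = ((A m).updateRow 0 (Pi.single (Fin.last m) 1)).det := by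
  have hinv : (A m)⁻¹ = B m := Matrix.inv_eq_right_inv (AB m)
  have h1 : b m = (A m)⁻¹ (Fin.last m) 0 := by
    rw [hinv]
    simp [B]
  rw [h1, Matrix.inv_def, detA]
  simp [Matrix.adjugate_apply]

theorem det_eq (m : ℕ) :
    ((A m).updateRow 0 (Pi.single (Fin.last m) 1)).det
      = (-1 : ℚ) ^ m * Matrix.det (Matrix.of fun i j : Fin m =>
        if (j : ℕ) = (i : ℕ) + 1 then 1
        else if (j : ℕ) ≤ (i : ℕ) then
          (-1 : ℚ) ^ ((i : ℕ) - (j : ℕ) + 1) / (((i : ℕ) - (j : ℕ) + 2 : ℕ) : ℚ)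
        else 0) := by
  set D := (A m).updateRow 0 (Pi.single (Fin.last m) (1 : ℚ)) with hD
  rw [Matrix.det_succ_row_zero]
  rw [Finset.sum_eq_single (Fin.last m)
    (fun j _ hj => by
      have h0 : D 0 j = 0 := by
        rw [hD, Matrix.updateRow_self, Pi.single_eq_of_ne hj]
      rw [h0, mul_zero, zero_mul])
    (fun h => absurd (Finset.mem_univ _) h)]
  have hD0 : D 0 (Fin.last m) = 1 := by
    rw [hD, Matrix.updateRow_self, Pi.single_eq_same]
  rw [hD0, Fin.succAbove_last]
  simp only [Fin.val_last, mul_one]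
  have hmat : D.submatrix Fin.succ Fin.castSucc = Matrix.of (fun i j : Fin m =>
        if (j : ℕ) = (i : ℕ) + 1 then 1
        else if (j : ℕ) ≤ (i : ℕ) then
          (-1 : ℚ) ^ ((i : ℕ) - (j : ℕ) + 1) / (((i : ℕ) - (j : ℕ) + 2 : ℕ) : ℚ)
        else 0) := by
    ext i j
    have hne : (Fin.succ i) ≠ 0 := Fin.succ_ne_zero i
    simp only [Matrix.submatrix_apply, hD, Matrix.updateRow_ne hne, A, Matrix.of_apply,
      Fin.val_succ, Fin.coe_castSucc]
    rcases Nat.lt_trichotomy (j : ℕ) ((i : ℕ) + 1) with hj | hj | hj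
    · rw [if_pos (by omega), if_neg (by omega), if_pos (by omega)]
      have h1 : (i : ℕ) + 1 - (j : ℕ) = (i : ℕ) - (j : ℕ) + 1 := by omega
      rw [h1, a_def]
      push_cast
      ring_nf
    · rw [if_pos (by omega), if_pos hj]
      have h1 : (i : ℕ) + 1 - (j : ℕ) = 0 := by omega
      rw [h1, a_zero]
    · rw [if_neg (by omega), if_neg (by omega), if_neg (by omega)]
  rw [hmat]

end CauchyDetAux

/-- **Glaisher's determinant expression of Cauchy numbers.**  For every `m ≥ 1`,
`c_m = (-1)^m m! det A`, where `A` is the `m × m` lower Hessenberg matrix over `ℚ` with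
entries `A_{i,j} = (-1)^(i-j+1)/(i-j+2)` for `j ≤ i`, `A_{i,i+1} = 1`, and `A_{i,j} = 0`
otherwise. -/
theorem cauchyNumber_det (m : ℕ) (hm : 1 ≤ m) :
    cauchyNumber m = (-1 : ℚ) ^ m * (Nat.factorial m : ℚ) *
      Matrix.det (Matrix.of fun i j : Fin m =>
        if (j : ℕ) = (i : ℕ) + 1 then 1
        else if (j : ℕ) ≤ (i : ℕ) then
          (-1 : ℚ) ^ ((i : ℕ) - (j : ℕ) + 1) / (((i : ℕ) - (j : ℕ) + 2 : ℕ) : ℚ)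
        else 0) := by
  have h := CauchyDetAux.b_eq_det m
  rw [CauchyDetAux.det_eq] at h
  have hc : cauchyNumber m = (Nat.factorial m : ℚ) * CauchyDetAux.b m := rfl
  rw [hc, h]
  ring
end
end

section
/- For every m ≥ 1, the Bernoulli numbers satisfy Glaisher's determinant expression B_m = (−1)^m · m! · det A, where A is the m×m lower Hessenberg matrix over ℚ with entries A_{i,j} = 1/(i−j+2)! for 1 ≤ j ≤ i ≤ m, A_{i,i+1} = 1 for 1 ≤ i ≤ m−1, and A_{i,j} = 0 for j > i+1. -/
noncomputable section

open Finset

/-- Normalized Bernoulli numbers `B_n / n!`. -/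
def bQ (n : ℕ) : ℚ := bernoulli n / n.factorial

lemma bQ_sum (n : ℕ) :
    ∑ k ∈ range (n + 1), bQ k / ((n + 1 - k).factorial : ℚ) =
      if n = 0 then 1 else 0 := by
  have h := sum_bernoulli (n + 1)
  have key : ∀ k ∈ range (n + 1),
      ((n + 1).choose k : ℚ) * bernoulli k =
        ((n+1).factorial : ℚ) * (bQ k / ((n + 1 - k).factorial : ℚ)) := by
    intro k hk
    rw [mem_range] at hk
    have hk' : k ≤ n + 1 := by omega
    rw [Nat.cast_choose ℚ hk', bQ]
    have h1 : (k.factorial : ℚ) ≠ 0 := by positivity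
    have h2 : ((n + 1 - k).factorial : ℚ) ≠ 0 := by positivity
    field_simp
  rw [Finset.sum_congr rfl key, ← Finset.mul_sum] at h
  have hf : ((n+1).factorial : ℚ) ≠ 0 := by positivity
  rcases Nat.eq_zero_or_pos n with hn | hn
  · subst hn
    simp at h ⊢
    simpa using h
  · have hne : n + 1 ≠ 1 := by omega
    rw [if_neg hne] at h
    have h0 : ∑ k ∈ range (n + 1), bQ k / ((n + 1 - k).factorial : ℚ) = 0 := by
      rcases mul_eq_zero.mp h with h' | h'
      · exact absurd h' hf
      · exact h'
    rw [h0, if_neg (by omega)]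

lemma bQ_tail (n : ℕ) :
    ∑ k ∈ range (n + 1), bQ k / ((n - k + 2).factorial : ℚ) = - bQ (n + 1) := by
  have h := bQ_sum (n + 1)
  rw [if_neg (by omega), Finset.sum_range_succ] at h
  have hlast : bQ (n + 1) / ((n + 1 + 1 - (n + 1)).factorial : ℚ) = bQ (n + 1) := by
    norm_num
  rw [hlast] at h
  have he : ∑ k ∈ range (n + 1), bQ k / ((n + 1 + 1 - k).factorial : ℚ)
      = ∑ k ∈ range (n + 1), bQ k / ((n - k + 2).factorial : ℚ) := by
    apply Finset.sum_congr rfl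
    intro k hk
    rw [mem_range] at hk
    congr 3
    omega
  rw [he] at h
  linarith

/-- entry function -/
def ent (c i j : ℕ) : ℚ :=
  if j = 0 then 1 / ((i + c).factorial : ℚ)
  else if j = i + 1 then 1
  else if j ≤ i then 1 / ((i - j + 2).factorial : ℚ)
  else 0

lemma ent_shift (c i j : ℕ) : ent c (i + 1) (j + 1) = ent 2 i j := by
  unfold ent
  split_ifs <;>
    first
      | rfl
      | (exfalso; first | assumption | omega)
      | (congr 1; congr 1; congr 1; omega)

lemma ent_shift' (c i j : ℕ) :
    ent c (i + 1) (if j = 0 then 0 else j + 1) = ent (c + 1) i j := by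
  by_cases hj : j = 0
  · subst hj
    unfold ent
    rw [if_pos rfl, if_pos rfl, if_pos rfl]
    congr 1
    congr 1
    congr 1
    omega
  · rw [if_neg hj]
    unfold ent
    split_ifs <;>
      first
        | rfl
        | (exfalso; first | assumption | omega)
        | (congr 1; congr 1; congr 1; omega)

/-- The auxiliary two-parameter Hessenberg matrix family. -/
def Dmat (n c : ℕ) : Matrix (Fin n) (Fin n) ℚ :=
  Matrix.of fun i j => ent c (i : ℕ) (j : ℕ)

lemma Dmat_det (n : ℕ) : ∀ c : ℕ,
    (Dmat (n + 1) c).det =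
      (-1 : ℚ) ^ n * ∑ k ∈ range (n + 1), bQ k / ((n - k + c).factorial : ℚ) := by
  induction n with
  | zero =>
      intro c
      rw [Matrix.det_fin_one]
      simp [Dmat, ent, bQ]
  | succ n ih =>
      intro c
      rw [Matrix.det_succ_row_zero]
      rw [Fin.sum_univ_succ, Fin.sum_univ_succ]
      have e0 : Dmat (n + 2) c 0 0 = 1 / (c.factorial : ℚ) := by
        simp [Dmat, ent]
      have e1 : Dmat (n + 2) c 0 (Fin.succ 0) = 1 := by
        show ent c ((0 : Fin (n+2)) : ℕ) ((Fin.succ (0:Fin (n+1)) : Fin (n+2)) : ℕ) = 1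
        rw [Fin.val_succ, Fin.val_zero, Fin.val_zero]
        unfold ent
        norm_num
      have e2 : ∀ j : Fin n, Dmat (n + 2) c 0 j.succ.succ = 0 := by
        intro j
        show ent c ((0 : Fin (n+2)) : ℕ) ((j.succ.succ : Fin (n+2)) : ℕ) = 0
        rw [Fin.val_succ, Fin.val_succ, Fin.val_zero]
        unfold ent
        rw [if_neg (by omega), if_neg (by omega), if_neg (by omega)]
      rw [e0, e1]
      simp only [e2, mul_zero, zero_mul, Finset.sum_const_zero, add_zero]
      have m0 : (Dmat (n + 2) c).submatrix Fin.succ ((0 : Fin (n+2)).succAbove)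
          = Dmat (n + 1) 2 := by
        ext i j
        show ent c ((i.succ : Fin (n+2)) : ℕ) (((0 : Fin (n+2)).succAbove j : Fin (n+2)) : ℕ)
            = ent 2 (i : ℕ) (j : ℕ)
        rw [Fin.succAbove_zero, Fin.val_succ, Fin.val_succ]
        exact ent_shift c i j
      have m1 : (Dmat (n + 2) c).submatrix Fin.succ ((Fin.succ (0 : Fin (n+1))).succAbove)
          = Dmat (n + 1) (c + 1) := by
        ext i j
        have hval : (((Fin.succ (0 : Fin (n+1))).succAbove j : Fin (n+2)) : ℕ)
            = if (j : ℕ) = 0 then 0 else (j : ℕ) + 1 := by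
          rcases Nat.eq_zero_or_pos (j : ℕ) with hj | hj
          · rw [if_pos hj, Fin.succAbove_of_castSucc_lt]
            · simp [Fin.ext_iff.mp (Fin.val_injective hj : j = 0)]
              try omega
            · rw [Fin.lt_def]
              exact Nat.lt_succ_of_le hj.le
          · rw [if_neg hj.ne', Fin.succAbove_of_le_castSucc]
            · simp
            · rw [Fin.le_def]
              exact hj
        show ent c ((i.succ : Fin (n+2)) : ℕ) (((Fin.succ (0 : Fin (n+1))).succAbove j : Fin (n+2)) : ℕ)
            = ent (c + 1) (i : ℕ) (j : ℕ)
        rw [hval, Fin.val_succ]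
        exact ent_shift' c i j
      rw [m0, m1, ih 2, ih (c + 1), bQ_tail]
      conv_rhs => rw [Finset.sum_range_succ]
      have hlast : bQ (n + 1) / ((n + 1 - (n + 1) + c).factorial : ℚ)
          = bQ (n + 1) / (c.factorial : ℚ) := by
        congr 3
        omega
      rw [hlast]
      have hrest : ∑ k ∈ range (n + 1), bQ k / ((n + 1 - k + c).factorial : ℚ)
          = ∑ k ∈ range (n + 1), bQ k / ((n - k + (c + 1)).factorial : ℚ) := by
        apply Finset.sum_congr rfl
        intro k hk
        rw [mem_range] at hk
        congr 3
        omega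
      rw [hrest]
      simp only [Fin.val_zero, Fin.val_succ, pow_zero, pow_one, pow_succ]
      ring

/-- **Glaisher's determinant expression of Bernoulli numbers.**  For every `m ≥ 1`, the
Bernoulli numbers (with `B_1 = -1/2`, as given by Mathlib's `bernoulli`) satisfy
`B_m = (-1)^m m! det A`, where `A` is the `m × m` lower Hessenberg matrix over `ℚ` with
entries `A_{i,j} = 1/(i-j+2)!` for `j ≤ i`, `A_{i,i+1} = 1`, and `A_{i,j} = 0`
otherwise. -/
theorem bernoulli_det (m : ℕ) (hm : 1 ≤ m) :
    bernoulli m = (-1 : ℚ) ^ m * (Nat.factorial m : ℚ) *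
      Matrix.det (Matrix.of fun i j : Fin m =>
        if (j : ℕ) = (i : ℕ) + 1 then 1
        else if (j : ℕ) ≤ (i : ℕ) then
          (1 : ℚ) / ((Nat.factorial ((i : ℕ) - (j : ℕ) + 2) : ℕ) : ℚ)
        else 0) := by
  obtain ⟨n, rfl⟩ : ∃ n, m = n + 1 := ⟨m - 1, by omega⟩
  have hM : (Matrix.of fun i j : Fin (n+1) =>
        if (j : ℕ) = (i : ℕ) + 1 then 1
        else if (j : ℕ) ≤ (i : ℕ) then
          (1 : ℚ) / ((Nat.factorial ((i : ℕ) - (j : ℕ) + 2) : ℕ) : ℚ)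
        else 0) = Dmat (n + 1) 2 := by
    ext i j
    show _ = ent 2 (i : ℕ) (j : ℕ)
    simp only [Matrix.of_apply]
    unfold ent
    split_ifs <;>
      first
        | rfl
        | (exfalso; first | assumption | omega)
        | (congr 1; congr 1; congr 1; omega)
  rw [hM, Dmat_det n 2, bQ_tail, bQ]
  have hf : (((n+1).factorial : ℚ)) ≠ 0 := by positivity
  field_simp
  have h3 : ((-1 : ℚ)) ^ n * (-1 : ℚ) ^ n = 1 := by
    rw [← pow_add]
    exact Even.neg_one_pow ⟨n, rfl⟩
  rw [pow_succ]
  linear_combination (-bernoulli (n + 1)) * h3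
end
end
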